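/- Fix α > 0 and an integer p ≥ 2. For a phase parameter μ > 0 let φ^{(μ)} be the cardinal hyperbolic GB-splines with phase μ, and let φ be the polynomial cardinal B-splines; define f_p^{H_μ}(θ) := −(φ^{(μ)})̈ p ((p+1)/2) − 2·Σ_{k=1}^{⌊p/2⌋} (φ^{(μ)})̈ p ((p+1)/2 − k)·cos(kθ) and f_p(θ) := −φ̈ p ((p+1)/2) − 2·Σ_{k=1}^{⌊p/2⌋} φ̈ p ((p+1)/2 − k)·cos(kθ), where ·̈ denotes the second derivative in the argument t. Then there exist a constant C > 0 and an integer N such that for all n ≥ N: ∫_{−π}^{π} |f_p^{H_{α/n}}(θ) − f_p(θ)| dθ ≤ C · n^{−2}. -/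

import Mathlib

open Real MeasureTheory

noncomputable def fSym (φ : ℕ → ℝ → ℝ) (p : ℕ) (θ : ℝ) : ℝ :=
  -(deriv (deriv (φ p)) (((p : ℝ) + 1) / 2)) -
    2 * ∑ k ∈ Finset.Icc 1 (p / 2),
      deriv (deriv (φ p)) (((p : ℝ) + 1) / 2 - (k : ℝ)) * Real.cos ((k : ℝ) * θ)


lemma my_sinh_taylor {y : ℝ} (hy : |y| ≤ 1) : |Real.sinh y - y| ≤ |y| ^ 3 := by
  have h1 := Real.exp_bound hy (n := 3) (by norm_num)
  have h2 := Real.exp_bound (x := -y) (by rwa [abs_neg]) (n := 3) (by norm_num)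
  rw [abs_neg] at h2
  have e1 : ∑ m ∈ Finset.range 3, y ^ m / (Nat.factorial m) = 1 + y + y^2/2 := by
    norm_num [Finset.sum_range_succ, Nat.factorial]; try ring_nf
  have e2 : ∑ m ∈ Finset.range 3, (-y) ^ m / (Nat.factorial m) = 1 - y + y^2/2 := by
    norm_num [Finset.sum_range_succ, Nat.factorial]; try ring_nf
  rw [e1] at h1; rw [e2] at h2
  norm_num [Nat.factorial] at h1 h2
  rw [Real.sinh_eq]
  have : (Real.exp y - Real.exp (-y)) / 2 - y
      = ((Real.exp y - (1 + y + y^2/2)) - (Real.exp (-y) - (1 - y + y^2/2))) / 2 := by ring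
  rw [this]
  calc |((Real.exp y - (1 + y + y^2/2)) - (Real.exp (-y) - (1 - y + y^2/2))) / 2|
      ≤ (|Real.exp y - (1 + y + y^2/2)| + |Real.exp (-y) - (1 - y + y^2/2)|) / 2 := by
        rw [abs_div, abs_two]; gcongr; exact abs_sub _ _
    _ ≤ (|y|^3 * (2/9) + |y|^3 * (2/9)) / 2 := by gcongr
    _ ≤ |y|^3 := by nlinarith [abs_nonneg y, pow_nonneg (abs_nonneg y) 3]

lemma my_cosh_taylor {y : ℝ} (hy : |y| ≤ 1) : |Real.cosh y - 1 - y^2/2| ≤ y ^ 4 := by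
  have h1 := Real.exp_bound hy (n := 4) (by norm_num)
  have h2 := Real.exp_bound (x := -y) (by rwa [abs_neg]) (n := 4) (by norm_num)
  rw [abs_neg] at h2
  have e1 : ∑ m ∈ Finset.range 4, y ^ m / (Nat.factorial m) = 1 + y + y^2/2 + y^3/6 := by
    norm_num [Finset.sum_range_succ, Nat.factorial]; try ring_nf
  have e2 : ∑ m ∈ Finset.range 4, (-y) ^ m / (Nat.factorial m) = 1 - y + y^2/2 - y^3/6 := by
    norm_num [Finset.sum_range_succ, Nat.factorial]; try ring_nf
  rw [e1] at h1; rw [e2] at h2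
  norm_num [Nat.factorial] at h1 h2
  rw [Real.cosh_eq]
  have : (Real.exp y + Real.exp (-y)) / 2 - 1 - y^2/2
      = ((Real.exp y - (1 + y + y^2/2 + y^3/6)) + (Real.exp (-y) - (1 - y + y^2/2 - y^3/6))) / 2 := by
    ring
  rw [this]
  have hy4 : |y|^4 = y^4 := by rw [← abs_pow]; exact abs_of_nonneg (by positivity)
  calc |((Real.exp y - (1 + y + y^2/2 + y^3/6)) + (Real.exp (-y) - (1 - y + y^2/2 - y^3/6))) / 2|
      ≤ (|Real.exp y - (1 + y + y^2/2 + y^3/6)| + |Real.exp (-y) - (1 - y + y^2/2 - y^3/6)|) / 2 := by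
        rw [abs_div, abs_two]; gcongr; exact abs_add_le _ _
    _ ≤ (|y|^4 * (5/96) + |y|^4 * (5/96)) / 2 := by gcongr
    _ ≤ y^4 := by rw [hy4] at *; nlinarith [pow_nonneg (sq_nonneg y) 2]

lemma my_cosh_lb {y : ℝ} (hy : 0 ≤ y) : y^2/2 ≤ Real.cosh y - 1 := by
  have h : Real.cosh y = Real.cosh (2 * (y/2)) := by congr 1; ring
  rw [h, Real.cosh_two_mul, Real.cosh_sq]
  have hs : y/2 ≤ Real.sinh (y/2) := Real.self_le_sinh_iff.2 (by linarith)
  nlinarith [hs]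


lemma fam_cont (G : ℕ → ℝ → ℝ) (h1 : Continuous (G 1))
    (hrec : ∀ q : ℕ, 2 ≤ q → ∀ t : ℝ, G q t = ∫ s in (0:ℝ)..t, (G (q-1) s - G (q-1) (s-1))) :
    ∀ q : ℕ, 1 ≤ q → Continuous (G q) := by
  intro q
  induction q with
  | zero => intro h; omega
  | succ n ih =>
    intro _
    rcases Nat.lt_or_ge n 1 with h | h
    · have : n = 0 := by omega
      subst this; exact h1
    · have hcn := ih h
      have hc : Continuous (fun s : ℝ => G n s - G n (s - 1)) :=
        hcn.sub (hcn.comp (continuous_id.sub continuous_const))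
      have hG : G (n+1) = fun t => ∫ s in (0:ℝ)..t, (G n s - G n (s-1)) := by
        funext t
        simpa using hrec (n+1) (by omega) t
      rw [hG, continuous_iff_continuousAt]
      intro t
      exact ((hc.integral_hasStrictDerivAt 0 t).hasDerivAt).continuousAt

lemma fam_hasDerivAt (G : ℕ → ℝ → ℝ) (h1 : Continuous (G 1))
    (hrec : ∀ q : ℕ, 2 ≤ q → ∀ t : ℝ, G q t = ∫ s in (0:ℝ)..t, (G (q-1) s - G (q-1) (s-1)))
    (k : ℕ) (t : ℝ) :
    HasDerivAt (G (k+2)) (G (k+1) t - G (k+1) (t-1)) t := by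
  have hcn := fam_cont G h1 hrec (k+1) (by omega)
  have hc : Continuous (fun s : ℝ => G (k+1) s - G (k+1) (s - 1)) :=
    hcn.sub (hcn.comp (continuous_id.sub continuous_const))
  have hG : G (k+2) = fun u => ∫ s in (0:ℝ)..u, (G (k+1) s - G (k+1) (s-1)) := by
    funext u; simpa using hrec (k+2) (by omega) u
  rw [hG]
  exact (hc.integral_hasStrictDerivAt 0 t).hasDerivAt

lemma fam_deriv2 (G : ℕ → ℝ → ℝ) (h1 : Continuous (G 1))
    (hrec : ∀ q : ℕ, 2 ≤ q → ∀ t : ℝ, G q t = ∫ s in (0:ℝ)..t, (G (q-1) s - G (q-1) (s-1)))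
    (k : ℕ) (t : ℝ) :
    deriv (deriv (G (k+3))) t
      = (G (k+1) t - G (k+1) (t-1)) - (G (k+1) (t-1) - G (k+1) (t-2)) := by
  have hd : deriv (G (k+3)) = fun u => G (k+2) u - G (k+2) (u-1) := by
    funext u
    exact (fam_hasDerivAt G h1 hrec (k+1) u).deriv
  rw [hd]
  have hA : HasDerivAt (fun u : ℝ => G (k+2) u) (G (k+1) t - G (k+1) (t-1)) t :=
    fam_hasDerivAt G h1 hrec k t
  have hB : HasDerivAt (fun u : ℝ => G (k+2) (u-1)) (G (k+1) (t-1) - G (k+1) (t-2)) t := by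
    have hB0 := (fam_hasDerivAt G h1 hrec k (t-1)).comp t ((hasDerivAt_id t).sub_const 1)
    have e : t - 1 - 1 = t - 2 := by ring
    simpa [Function.comp_def, e] using hB0
  exact (hA.sub hB).deriv

lemma hasDerivAt_of_eq_on_Ioo {F f : ℝ → ℝ} {a b t d : ℝ} (hab : t ∈ Set.Ioo a b)
    (heq : ∀ u ∈ Set.Ioo a b, F u = f u) (hf : HasDerivAt f d t) : HasDerivAt F d t :=
  hf.congr_of_eventuallyEq (Filter.eventuallyEq_of_mem (Ioo_mem_nhds hab.1 hab.2) heq)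


lemma phi1_closed {Φ1 : ℝ → ℝ} {μ : ℝ}
    (h : ∀ t : ℝ, Φ1 t = if 0 ≤ t ∧ t < 1 then μ/(2*(Real.cosh μ - 1)) * Real.sinh (μ*t)
      else if 1 ≤ t ∧ t < 2 then μ/(2*(Real.cosh μ - 1)) * Real.sinh (μ*(2-t)) else 0) :
    Φ1 = fun t => μ/(2*(Real.cosh μ - 1)) * Real.sinh (μ * max 0 (min t (2 - t))) := by
  funext t
  rw [h t]
  split_ifs with h1 h2
  · rw [min_eq_left (by linarith [h1.1, h1.2]), max_eq_right h1.1]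
  · rw [min_eq_right (by linarith [h2.1]), max_eq_right (by linarith [h2.2])]
  · push_neg at h1 h2
    rcases lt_or_ge t 0 with ht | ht
    · rw [min_eq_left (by linarith), max_eq_left (le_of_lt ht)]
      simp
    · have ht1 : 1 ≤ t := h1 ht
      have ht2 : 2 ≤ t := h2 ht1
      rw [min_eq_right (by linarith), max_eq_left (by linarith)]
      simp

lemma psi1_closed {ψ1 : ℝ → ℝ}
    (h : ∀ t : ℝ, ψ1 t = if 0 ≤ t ∧ t < 1 then t
      else if 1 ≤ t ∧ t < 2 then 2 - t else 0) :
    ψ1 = fun t => max 0 (min t (2 - t)) := by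
  funext t
  rw [h t]
  split_ifs with h1 h2
  · rw [min_eq_left (by linarith [h1.1, h1.2]), max_eq_right h1.1]
  · rw [min_eq_right (by linarith [h2.1]), max_eq_right (by linarith [h2.2])]
  · push_neg at h1 h2
    rcases lt_or_ge t 0 with ht | ht
    · rw [min_eq_left (by linarith), max_eq_left (le_of_lt ht)]
    · have ht1 : 1 ≤ t := h1 ht
      have ht2 : 2 ≤ t := h2 ht1
      rw [min_eq_right (by linarith), max_eq_left (by linarith)]


lemma base_est {μ x : ℝ} (h0 : 0 < μ) (h1 : μ ≤ 1) (hx0 : 0 ≤ x) (hx1 : x ≤ 1) :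
    |μ / (2*(Real.cosh μ - 1)) * Real.sinh (μ*x) - x| ≤ 3 * μ^2 := by
  have hD : μ^2 ≤ 2*(Real.cosh μ - 1) := by have := my_cosh_lb h0.le; linarith
  have hDpos : 0 < 2*(Real.cosh μ - 1) := lt_of_lt_of_le (by positivity) hD
  have hμx : |μ*x| ≤ 1 := by
    rw [abs_of_nonneg (by positivity)]; nlinarith
  have hs := my_sinh_taylor hμx
  have hμ1 : |μ| ≤ 1 := by rwa [abs_of_pos h0]
  have hc := my_cosh_taylor hμ1
  have e : μ / (2*(Real.cosh μ - 1)) * Real.sinh (μ*x) - x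
      = (μ * (Real.sinh (μ*x) - μ*x) - (2*(Real.cosh μ - 1) - μ^2)*x) / (2*(Real.cosh μ - 1)) := by
    have hne : Real.cosh μ - 1 ≠ 0 := ne_of_gt (by linarith); field_simp; ring
  rw [e, abs_div, abs_of_pos hDpos]
  have hnum : |μ * (Real.sinh (μ*x) - μ*x) - (2*(Real.cosh μ - 1) - μ^2)*x| ≤ 3*μ^4 := by
    have habs3 : |μ*x| ^ 3 ≤ μ^3 := by
      rw [abs_of_nonneg (by positivity)]
      have : μ * x ≤ μ := by nlinarith
      exact pow_le_pow_left₀ (by positivity) this 3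
    have hs' : |Real.sinh (μ*x) - μ*x| ≤ μ^3 := hs.trans habs3
    have h2 : |2*(Real.cosh μ - 1) - μ^2| ≤ 2*μ^4 := by
      have e2 : 2*(Real.cosh μ - 1) - μ^2 = 2*(Real.cosh μ - 1 - μ^2/2) := by ring
      rw [e2, abs_mul, abs_two]
      linarith
    calc |μ * (Real.sinh (μ*x) - μ*x) - (2*(Real.cosh μ - 1) - μ^2)*x|
        ≤ |μ * (Real.sinh (μ*x) - μ*x)| + |(2*(Real.cosh μ - 1) - μ^2)*x| := abs_sub _ _
      _ = μ * |Real.sinh (μ*x) - μ*x| + |2*(Real.cosh μ - 1) - μ^2| * x := by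
          rw [abs_mul, abs_mul, abs_of_pos h0, abs_of_nonneg hx0]
      _ ≤ μ * μ^3 + (2*μ^4) * 1 := by gcongr
      _ ≤ 3*μ^4 := by nlinarith [pow_pos h0 4]
  calc |μ * (Real.sinh (μ*x) - μ*x) - (2*(Real.cosh μ - 1) - μ^2)*x| / (2*(Real.cosh μ - 1))
      ≤ (3*μ^4) / (2*(Real.cosh μ - 1)) := by gcongr
    _ ≤ (3*μ^4) / (μ^2) := by gcongr
    _ = 3*μ^2 := by field_simp

lemma base_est' {μ : ℝ} (h0 : 0 < μ) (h1 : μ ≤ 1) :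
    |μ / (2*(Real.cosh μ - 1)) * (μ * Real.cosh (μ*(1/2))) - 1| ≤ 3 * μ^2 := by
  have hD : μ^2 ≤ 2*(Real.cosh μ - 1) := by have := my_cosh_lb h0.le; linarith
  have hDpos : 0 < 2*(Real.cosh μ - 1) := lt_of_lt_of_le (by positivity) hD
  have hhalf : |μ*(1/2)| ≤ 1 := by rw [abs_of_nonneg (by positivity)]; nlinarith
  have hc2 := my_cosh_taylor hhalf
  have hμ1 : |μ| ≤ 1 := by rwa [abs_of_pos h0]
  have hc := my_cosh_taylor hμ1
  have e : μ / (2*(Real.cosh μ - 1)) * (μ * Real.cosh (μ*(1/2))) - 1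
      = (μ^2 * Real.cosh (μ*(1/2)) - 2*(Real.cosh μ - 1)) / (2*(Real.cosh μ - 1)) := by
    have hne : Real.cosh μ - 1 ≠ 0 := ne_of_gt (by linarith); field_simp
  rw [e, abs_div, abs_of_pos hDpos]
  have hnum : |μ^2 * Real.cosh (μ*(1/2)) - 2*(Real.cosh μ - 1)| ≤ 3*μ^4 := by
    rw [abs_le] at hc hc2
    rw [abs_le]
    have hμ2 : μ^2 ≤ 1 := by nlinarith
    have h6 : μ^6 ≤ μ^4 := by nlinarith [pow_pos h0 4]
    have hA := mul_le_mul_of_nonneg_left hc2.2 (sq_nonneg μ)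
    have hB := mul_le_mul_of_nonneg_left hc2.1 (sq_nonneg μ)
    constructor <;> nlinarith [hA, hB, hc.1, hc.2, pow_pos h0 4]
  calc |μ^2 * Real.cosh (μ*(1/2)) - 2*(Real.cosh μ - 1)| / (2*(Real.cosh μ - 1))
      ≤ (3*μ^4) / (2*(Real.cosh μ - 1)) := by gcongr
    _ ≤ (3*μ^4) / (μ^2) := by gcongr
    _ = 3*μ^2 := by field_simp


lemma cont_m : Continuous (fun t : ℝ => max 0 (min t (2 - t))) :=
  continuous_const.max (continuous_id.min (continuous_const.sub continuous_id))

lemma mem_m {t : ℝ} : 0 ≤ max 0 (min t (2 - t)) ∧ max 0 (min t (2 - t)) ≤ 1 := by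
  constructor
  · exact le_max_left _ _
  · apply max_le (by norm_num)
    rcases le_total t 1 with h | h
    · exact (min_le_left _ _).trans h
    · exact (min_le_right _ _).trans (by linarith)

lemma diff_est (Φ : ℝ → ℕ → ℝ → ℝ) (ψ : ℕ → ℝ → ℝ)
    (hΦ1 : ∀ μ : ℝ, 0 < μ → ∀ t : ℝ, Φ μ 1 t =
      if 0 ≤ t ∧ t < 1 then μ / (2 * (Real.cosh μ - 1)) * Real.sinh (μ * t)
      else if 1 ≤ t ∧ t < 2 then μ / (2 * (Real.cosh μ - 1)) * Real.sinh (μ * (2 - t))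
      else 0)
    (hΦrec : ∀ μ : ℝ, 0 < μ → ∀ q : ℕ, 2 ≤ q → ∀ t : ℝ,
      Φ μ q t = ∫ s in (0:ℝ)..t, (Φ μ (q - 1) s - Φ μ (q - 1) (s - 1)))
    (hψ1 : ∀ t : ℝ, ψ 1 t =
      if 0 ≤ t ∧ t < 1 then t
      else if 1 ≤ t ∧ t < 2 then 2 - t
      else 0)
    (hψrec : ∀ q : ℕ, 2 ≤ q → ∀ t : ℝ,
      ψ q t = ∫ s in (0:ℝ)..t, (ψ (q - 1) s - ψ (q - 1) (s - 1))) :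
    ∀ q : ℕ, 1 ≤ q → ∃ K : ℝ, 0 < K ∧ ∀ μ : ℝ, 0 < μ → μ ≤ 1 →
      ∀ t : ℝ, |Φ μ q t - ψ q t| ≤ K * μ^2 * (1+|t|)^(q-1) := by
  have hψcont : Continuous (ψ 1) := by rw [psi1_closed hψ1]; exact cont_m
  intro q
  induction q with
  | zero => intro h; omega
  | succ n ih =>
    intro _
    rcases Nat.lt_or_ge n 1 with hn | hn
    · have : n = 0 := by omega
      subst this
      refine ⟨3, by norm_num, ?_⟩
      intro μ hμ0 hμ1 t
      norm_num
      rw [phi1_closed (hΦ1 μ hμ0), psi1_closed hψ1]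
      exact base_est hμ0 hμ1 mem_m.1 mem_m.2
    · obtain ⟨m, rfl⟩ : ∃ m, n = m + 1 := ⟨n-1, by omega⟩
      obtain ⟨K, hK, hKb⟩ := ih hn
      refine ⟨2^(m+1) * K, by positivity, ?_⟩
      intro μ hμ0 hμ1 t
      simp only [Nat.add_sub_cancel] at *
      have hΦcont1 : Continuous (Φ μ 1) := by
        rw [phi1_closed (hΦ1 μ hμ0)]
        exact continuous_const.mul (Real.continuous_sinh.comp (continuous_const.mul cont_m))
      have hΦc := fam_cont (Φ μ) hΦcont1 (hΦrec μ hμ0) (m+1) (by omega)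
      have hψc := fam_cont ψ hψcont hψrec (m+1) (by omega)
      have hint1 : IntervalIntegrable (fun s => Φ μ (m+1) s - Φ μ (m+1) (s-1)) volume 0 t :=
        ((hΦc.sub (hΦc.comp (continuous_id.sub continuous_const)))).intervalIntegrable _ _
      have hint2 : IntervalIntegrable (fun s => ψ (m+1) s - ψ (m+1) (s-1)) volume 0 t :=
        ((hψc.sub (hψc.comp (continuous_id.sub continuous_const)))).intervalIntegrable _ _
      have e : Φ μ (m+1+1) t - ψ (m+1+1) t
          = ∫ s in (0:ℝ)..t,
              ((Φ μ (m+1) s - Φ μ (m+1) (s-1)) - (ψ (m+1) s - ψ (m+1) (s-1))) := by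
        rw [hΦrec μ hμ0 (m+1+1) (by omega) t, hψrec (m+1+1) (by omega) t]
        simp only [Nat.add_sub_cancel]
        rw [← intervalIntegral.integral_sub hint1 hint2]
      rw [e]
      have hb : ∀ s ∈ Set.uIoc (0:ℝ) t,
          ‖(Φ μ (m+1) s - Φ μ (m+1) (s-1)) - (ψ (m+1) s - ψ (m+1) (s-1))‖
            ≤ 2*K*μ^2*(2+|t|)^m := by
        intro s hs
        have hst : |s| ≤ |t| := by
          rcases hs with ⟨hs1, hs2⟩
          have h1 : -|t| ≤ 0 ⊓ t := le_inf (by simp [abs_nonneg]) (neg_abs_le t)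
          have h2 : 0 ⊔ t ≤ |t| := sup_le (abs_nonneg t) (le_abs_self t)
          rw [abs_le]; constructor <;> [linarith [hs1]; linarith [hs2]]
        have h1 := hKb μ hμ0 hμ1 s
        have h2 := hKb μ hμ0 hμ1 (s-1)
        have key1 : (1+|s|)^m ≤ (2+|t|)^m :=
          pow_le_pow_left₀ (by positivity) (by linarith) _
        have key2 : (1+|s-1|)^m ≤ (2+|t|)^m := by
          apply pow_le_pow_left₀ (by positivity)
          have := abs_sub s 1
          simp only [abs_one] at this
          linarith
        have e2 : (Φ μ (m+1) s - Φ μ (m+1) (s-1)) - (ψ (m+1) s - ψ (m+1) (s-1))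
            = (Φ μ (m+1) s - ψ (m+1) s) - (Φ μ (m+1) (s-1) - ψ (m+1) (s-1)) := by ring
        rw [Real.norm_eq_abs, e2]
        calc |(Φ μ (m+1) s - ψ (m+1) s) - (Φ μ (m+1) (s-1) - ψ (m+1) (s-1))|
            ≤ |Φ μ (m+1) s - ψ (m+1) s| + |Φ μ (m+1) (s-1) - ψ (m+1) (s-1)| := abs_sub _ _
          _ ≤ K*μ^2*(2+|t|)^m + K*μ^2*(2+|t|)^m := by
              gcongr
              · exact h1.trans (by gcongr)
              · exact h2.trans (by gcongr)
          _ = 2*K*μ^2*(2+|t|)^m := by ring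
      have hI := intervalIntegral.norm_integral_le_of_norm_le_const hb
      rw [Real.norm_eq_abs] at hI
      refine hI.trans ?_
      have h2t : (2+|t|)^m ≤ 2^m * (1+|t|)^m := by
        rw [← mul_pow]
        exact pow_le_pow_left₀ (by positivity) (by linarith [abs_nonneg t]) _
      calc 2*K*μ^2*(2+|t|)^m * |t - 0|
          ≤ 2*K*μ^2*(2^m*(1+|t|)^m) * (1+|t|) := by
            rw [sub_zero]
            gcongr
            linarith [abs_nonneg t]
        _ = 2^(m+1)*K*μ^2*(1+|t|)^(m+1) := by ring

section Key

variable (Φ : ℝ → ℕ → ℝ → ℝ) (ψ : ℕ → ℝ → ℝ)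
variable (hΦ1 : ∀ μ : ℝ, 0 < μ → ∀ t : ℝ, Φ μ 1 t =
      if 0 ≤ t ∧ t < 1 then μ / (2 * (Real.cosh μ - 1)) * Real.sinh (μ * t)
      else if 1 ≤ t ∧ t < 2 then μ / (2 * (Real.cosh μ - 1)) * Real.sinh (μ * (2 - t))
      else 0)
    (hΦrec : ∀ μ : ℝ, 0 < μ → ∀ q : ℕ, 2 ≤ q → ∀ t : ℝ,
      Φ μ q t = ∫ s in (0:ℝ)..t, (Φ μ (q - 1) s - Φ μ (q - 1) (s - 1)))
    (hψ1 : ∀ t : ℝ, ψ 1 t =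
      if 0 ≤ t ∧ t < 1 then t
      else if 1 ≤ t ∧ t < 2 then 2 - t
      else 0)
    (hψrec : ∀ q : ℕ, 2 ≤ q → ∀ t : ℝ,
      ψ q t = ∫ s in (0:ℝ)..t, (ψ (q - 1) s - ψ (q - 1) (s - 1)))

include hΦ1 hΦrec hψ1 hψrec in
lemma key_est (p : ℕ) (hp : 2 ≤ p) :
    ∃ K2 : ℝ, 0 < K2 ∧ ∀ μ : ℝ, 0 < μ → μ ≤ 1 → ∀ k : ℕ, k ≤ p/2 →
      |deriv (deriv (Φ μ p)) (((p:ℝ)+1)/2 - (k:ℝ))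
        - deriv (deriv (ψ p)) (((p:ℝ)+1)/2 - (k:ℝ))| ≤ K2 * μ^2 := by
  have hψcont1 : Continuous (ψ 1) := by rw [psi1_closed hψ1]; exact cont_m
  have hΦcont1 : ∀ μ : ℝ, 0 < μ → Continuous (Φ μ 1) := fun μ hμ0 => by
    rw [phi1_closed (hΦ1 μ hμ0)]
    exact continuous_const.mul (Real.continuous_sinh.comp (continuous_const.mul cont_m))
  rcases Nat.lt_or_ge p 3 with hp2 | hp3
  · -- p = 2
    have hp2' : p = 2 := by omega
    subst hp2'
    refine ⟨12, by norm_num, ?_⟩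
    intro μ hμ0 hμ1 k hk
    have hb := base_est' hμ0 hμ1
    set c := μ / (2*(Real.cosh μ - 1)) with hc
    -- local derivative facts for Φ μ 1
    have phiMid : ∀ x : ℝ, x ∈ Set.Ioo (0:ℝ) 1 →
        HasDerivAt (Φ μ 1) (c * (Real.cosh (μ*x) * μ)) x := by
      intro x hx
      have hf0 := ((Real.hasDerivAt_sinh (μ*x)).comp x
          ((hasDerivAt_id x).const_mul μ)).const_mul c
      have hf : HasDerivAt (fun u : ℝ => c * Real.sinh (μ*u)) (c * (Real.cosh (μ*x) * μ)) x := by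
        simpa [Function.comp, mul_one] using hf0
      apply hasDerivAt_of_eq_on_Ioo hx ?_ hf
      intro u hu
      rw [hΦ1 μ hμ0 u, if_pos ⟨hu.1.le, hu.2⟩]
    have phiRight : ∀ x : ℝ, x ∈ Set.Ioo (1:ℝ) 2 →
        HasDerivAt (Φ μ 1) (c * (Real.cosh (μ*(2-x)) * (μ * -1))) x := by
      intro x hx
      have hf0 := ((Real.hasDerivAt_sinh (μ*(2-x))).comp x
          (((hasDerivAt_id x).const_sub 2).const_mul μ)).const_mul c
      have hf : HasDerivAt (fun u : ℝ => c * Real.sinh (μ*(2-u)))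
          (c * (Real.cosh (μ*(2-x)) * (μ * -1))) x := by
        simpa [Function.comp] using hf0
      apply hasDerivAt_of_eq_on_Ioo hx ?_ hf
      intro u hu
      rw [hΦ1 μ hμ0 u, if_neg (by push_neg; intro h; linarith [hu.1]), if_pos ⟨hu.1.le, hu.2⟩]
    have phiZero : ∀ x : ℝ, x ∈ Set.Ioo (-1:ℝ) 0 → HasDerivAt (Φ μ 1) 0 x := by
      intro x hx
      apply hasDerivAt_of_eq_on_Ioo hx ?_ (hasDerivAt_const x 0)
      intro u hu
      rw [hΦ1 μ hμ0 u, if_neg (by push_neg; intro h; linarith [hu.2]),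
        if_neg (by push_neg; intro h; linarith [hu.2])]
    -- local derivative facts for ψ 1
    have psiMid : ∀ x : ℝ, x ∈ Set.Ioo (0:ℝ) 1 → HasDerivAt (ψ 1) 1 x := by
      intro x hx
      apply hasDerivAt_of_eq_on_Ioo hx ?_ (hasDerivAt_id x)
      intro u hu
      rw [hψ1 u, if_pos ⟨hu.1.le, hu.2⟩]; rfl
    have psiRight : ∀ x : ℝ, x ∈ Set.Ioo (1:ℝ) 2 → HasDerivAt (ψ 1) (-1) x := by
      intro x hx
      apply hasDerivAt_of_eq_on_Ioo hx ?_ ((hasDerivAt_id x).const_sub 2)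
      intro u hu
      rw [hψ1 u, if_neg (by push_neg; intro h; linarith [hu.1]), if_pos ⟨hu.1.le, hu.2⟩]; rfl
    have psiZero : ∀ x : ℝ, x ∈ Set.Ioo (-1:ℝ) 0 → HasDerivAt (ψ 1) 0 x := by
      intro x hx
      apply hasDerivAt_of_eq_on_Ioo hx ?_ (hasDerivAt_const x 0)
      intro u hu
      rw [hψ1 u, if_neg (by push_neg; intro h; linarith [hu.2]),
        if_neg (by push_neg; intro h; linarith [hu.2])]
    -- first derivative of level-2 functions
    have hdΦ : deriv (Φ μ 2) = fun u => Φ μ 1 u - Φ μ 1 (u-1) := by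
      funext u
      exact (fam_hasDerivAt (Φ μ) (hΦcont1 μ hμ0) (hΦrec μ hμ0) 0 u).deriv
    have hdψ : deriv (ψ 2) = fun u => ψ 1 u - ψ 1 (u-1) := by
      funext u
      exact (fam_hasDerivAt ψ hψcont1 hψrec 0 u).deriv
    interval_cases k
    · -- k = 0 : point 3/2
      have ept : (((2:ℕ):ℝ)+1)/2 - ((0:ℕ):ℝ) = 3/2 := by norm_num
      rw [ept, hdΦ, hdψ]
      have hA : HasDerivAt (fun u : ℝ => Φ μ 1 u - Φ μ 1 (u-1))
          (c * (Real.cosh (μ*(2-3/2)) * (μ * -1)) - c * (Real.cosh (μ*(3/2-1)) * μ) * 1)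
          (3/2) := by
        refine HasDerivAt.sub (phiRight (3/2) (by norm_num)) ?_
        have h0 := (phiMid (3/2-1) (by norm_num)).comp (3/2 : ℝ)
          ((hasDerivAt_id (3/2:ℝ)).sub_const 1)
        simpa [Function.comp_def] using h0
      have hB : HasDerivAt (fun u : ℝ => ψ 1 u - ψ 1 (u-1))
          ((-1) - 1 * 1) (3/2) := by
        refine HasDerivAt.sub (psiRight (3/2) (by norm_num)) ?_
        have h0 := (psiMid (3/2-1) (by norm_num)).comp (3/2 : ℝ)
          ((hasDerivAt_id (3/2:ℝ)).sub_const 1)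
        simpa [Function.comp_def] using h0
      rw [hA.deriv, hB.deriv]
      have e1 : (2:ℝ) - 3/2 = 1/2 := by norm_num
      have e2 : (3:ℝ)/2 - 1 = 1/2 := by norm_num
      rw [e1, e2]
      have eabs : |c * (Real.cosh (μ*(1/2)) * (μ * -1)) - c * (Real.cosh (μ*(1/2)) * μ) * 1
          - ((-1) - 1*1)| = |(-2) * (c * (μ * Real.cosh (μ*(1/2))) - 1)| := by
        congr 1; ring
      rw [eabs, abs_mul]
      have : |(-2:ℝ)| = 2 := by norm_num
      rw [this]
      nlinarith [hb, abs_nonneg (c * (μ * Real.cosh (μ*(1/2))) - 1), sq_nonneg μ]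
    · -- k = 1 : point 1/2
      have ept : (((2:ℕ):ℝ)+1)/2 - ((1:ℕ):ℝ) = 1/2 := by norm_num
      rw [ept, hdΦ, hdψ]
      have hA : HasDerivAt (fun u : ℝ => Φ μ 1 u - Φ μ 1 (u-1))
          (c * (Real.cosh (μ*(1/2)) * μ) - 0 * 1) (1/2) := by
        refine HasDerivAt.sub (phiMid (1/2) (by norm_num)) ?_
        have h0 := (phiZero (1/2-1) (by norm_num)).comp (1/2 : ℝ)
          ((hasDerivAt_id (1/2:ℝ)).sub_const 1)
        simpa [Function.comp_def] using h0
      have hB : HasDerivAt (fun u : ℝ => ψ 1 u - ψ 1 (u-1))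
          (1 - 0 * 1) (1/2) := by
        refine HasDerivAt.sub (psiMid (1/2) (by norm_num)) ?_
        have h0 := (psiZero (1/2-1) (by norm_num)).comp (1/2 : ℝ)
          ((hasDerivAt_id (1/2:ℝ)).sub_const 1)
        simpa [Function.comp_def] using h0
      rw [hA.deriv, hB.deriv]
      have eabs : |c * (Real.cosh (μ*(1/2)) * μ) - 0 * 1 - (1 - 0*1)|
          = |c * (μ * Real.cosh (μ*(1/2))) - 1| := by
        congr 1; ring
      rw [eabs]
      nlinarith [hb, sq_nonneg μ]
  · -- p ≥ 3
    obtain ⟨k0, rfl⟩ : ∃ k0, p = k0 + 3 := ⟨p - 3, by omega⟩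
    obtain ⟨K, hK, hKb⟩ := diff_est Φ ψ hΦ1 hΦrec hψ1 hψrec (k0+1) (by omega)
    refine ⟨4*K*((k0:ℝ)+7)^k0, by positivity, ?_⟩
    intro μ hμ0 hμ1 k hk
    simp only [Nat.add_sub_cancel] at hKb
    set t : ℝ := (((k0+3:ℕ):ℝ)+1)/2 - (k:ℝ) with ht
    have hkcast : (k:ℝ) ≤ (k0:ℝ) + 3 := by
      have : k ≤ k0 + 3 := by omega
      exact_mod_cast this
    have hpt : |t| ≤ (k0:ℝ) + 4 := by
      rw [abs_le, ht]
      push_cast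
      constructor <;> [linarith [Nat.cast_nonneg (α := ℝ) k0]; linarith [Nat.cast_nonneg (α := ℝ) k]]
    have hdΦ := fam_deriv2 (Φ μ) (hΦcont1 μ hμ0) (hΦrec μ hμ0) k0 t
    have hdψ := fam_deriv2 ψ hψcont1 hψrec k0 t
    rw [hdΦ, hdψ]
    have hD : ∀ u : ℝ, |u| ≤ (k0:ℝ) + 6 → |Φ μ (k0+1) u - ψ (k0+1) u| ≤ K * μ^2 * ((k0:ℝ)+7)^k0 := by
      intro u hu
      refine (hKb μ hμ0 hμ1 u).trans ?_
      have hpow : (1+|u|)^k0 ≤ ((k0:ℝ)+7)^k0 :=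
        pow_le_pow_left₀ (by positivity) (by linarith [abs_nonneg u]) _
      exact mul_le_mul_of_nonneg_left hpow (by positivity)
    have h0 := hD t (by linarith)
    have h1 := hD (t-1) (by rw [abs_le] at hpt ⊢; constructor <;> linarith [hpt.1, hpt.2])
    have h2 := hD (t-2) (by rw [abs_le] at hpt ⊢; constructor <;> linarith [hpt.1, hpt.2])
    have e : (Φ μ (k0+1) t - Φ μ (k0+1) (t-1)) - (Φ μ (k0+1) (t-1) - Φ μ (k0+1) (t-2))
        - ((ψ (k0+1) t - ψ (k0+1) (t-1)) - (ψ (k0+1) (t-1) - ψ (k0+1) (t-2)))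
        = (Φ μ (k0+1) t - ψ (k0+1) t) - 2*(Φ μ (k0+1) (t-1) - ψ (k0+1) (t-1))
          + (Φ μ (k0+1) (t-2) - ψ (k0+1) (t-2)) := by ring
    rw [e]
    have habs : |(Φ μ (k0+1) t - ψ (k0+1) t) - 2*(Φ μ (k0+1) (t-1) - ψ (k0+1) (t-1))
          + (Φ μ (k0+1) (t-2) - ψ (k0+1) (t-2))|
        ≤ |Φ μ (k0+1) t - ψ (k0+1) t| + 2*|Φ μ (k0+1) (t-1) - ψ (k0+1) (t-1)|
          + |Φ μ (k0+1) (t-2) - ψ (k0+1) (t-2)| := by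
      calc _ ≤ |(Φ μ (k0+1) t - ψ (k0+1) t) - 2*(Φ μ (k0+1) (t-1) - ψ (k0+1) (t-1))|
            + |Φ μ (k0+1) (t-2) - ψ (k0+1) (t-2)| := abs_add_le _ _
        _ ≤ _ := by
            have h3 := abs_sub (Φ μ (k0+1) t - ψ (k0+1) t)
              (2*(Φ μ (k0+1) (t-1) - ψ (k0+1) (t-1)))
            rw [abs_mul, abs_two] at h3
            linarith
    refine habs.trans ?_
    nlinarith [h0, h1, h2]



include hΦ1 hΦrec hψ1 hψrec in
lemma propA (p : ℕ) (hp : 2 ≤ p) :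
    ∃ M : ℝ, 0 < M ∧ ∀ μ : ℝ, 0 < μ → μ ≤ 1 → ∀ θ : ℝ,
      |fSym (Φ μ) p θ - fSym ψ p θ| ≤ M * μ^2 := by
  obtain ⟨K2, hK2, hkey⟩ := key_est Φ ψ hΦ1 hΦrec hψ1 hψrec p hp
  refine ⟨K2 * (1 + (p:ℝ)), by positivity, ?_⟩
  intro μ hμ0 hμ1 θ
  have h0 := hkey μ hμ0 hμ1 0 (by omega)
  norm_num at h0
  have e : fSym (Φ μ) p θ - fSym ψ p θ
      = -(deriv (deriv (Φ μ p)) (((p:ℝ)+1)/2) - deriv (deriv (ψ p)) (((p:ℝ)+1)/2))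
        - 2 * ∑ k ∈ Finset.Icc 1 (p/2),
            ((deriv (deriv (Φ μ p)) (((p:ℝ)+1)/2 - (k:ℝ))
              - deriv (deriv (ψ p)) (((p:ℝ)+1)/2 - (k:ℝ))) * Real.cos ((k:ℝ)*θ)) := by
    simp only [fSym, sub_mul, Finset.sum_sub_distrib]
    ring
  rw [e]
  have hsum : |∑ k ∈ Finset.Icc 1 (p/2),
      ((deriv (deriv (Φ μ p)) (((p:ℝ)+1)/2 - (k:ℝ))
        - deriv (deriv (ψ p)) (((p:ℝ)+1)/2 - (k:ℝ))) * Real.cos ((k:ℝ)*θ))|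
      ≤ ((p/2 : ℕ) : ℝ) * (K2 * μ^2) := by
    calc |∑ k ∈ Finset.Icc 1 (p/2), _| ≤ ∑ k ∈ Finset.Icc 1 (p/2),
          |(deriv (deriv (Φ μ p)) (((p:ℝ)+1)/2 - (k:ℝ))
            - deriv (deriv (ψ p)) (((p:ℝ)+1)/2 - (k:ℝ))) * Real.cos ((k:ℝ)*θ)| :=
        Finset.abs_sum_le_sum_abs _ _
      _ ≤ ∑ k ∈ Finset.Icc 1 (p/2), K2 * μ^2 := by
          refine Finset.sum_le_sum fun k hk => ?_
          rw [abs_mul]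
          have h1 := hkey μ hμ0 hμ1 k (Finset.mem_Icc.mp hk).2
          have h2 : |Real.cos ((k:ℝ)*θ)| ≤ 1 := Real.abs_cos_le_one _
          nlinarith [abs_nonneg ((deriv (deriv (Φ μ p)) (((p:ℝ)+1)/2 - (k:ℝ))
            - deriv (deriv (ψ p)) (((p:ℝ)+1)/2 - (k:ℝ)))),
            abs_nonneg (Real.cos ((k:ℝ)*θ)), mul_pos hK2 (pow_pos hμ0 2)]
      _ = ((p/2 : ℕ) : ℝ) * (K2 * μ^2) := by
          rw [Finset.sum_const, Nat.card_Icc]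
          simp [nsmul_eq_mul]
  have habs : |-(deriv (deriv (Φ μ p)) (((p:ℝ)+1)/2) - deriv (deriv (ψ p)) (((p:ℝ)+1)/2))
      - 2 * ∑ k ∈ Finset.Icc 1 (p/2),
          ((deriv (deriv (Φ μ p)) (((p:ℝ)+1)/2 - (k:ℝ))
            - deriv (deriv (ψ p)) (((p:ℝ)+1)/2 - (k:ℝ))) * Real.cos ((k:ℝ)*θ))|
      ≤ |deriv (deriv (Φ μ p)) (((p:ℝ)+1)/2) - deriv (deriv (ψ p)) (((p:ℝ)+1)/2)|
        + 2 * |∑ k ∈ Finset.Icc 1 (p/2),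
          ((deriv (deriv (Φ μ p)) (((p:ℝ)+1)/2 - (k:ℝ))
            - deriv (deriv (ψ p)) (((p:ℝ)+1)/2 - (k:ℝ))) * Real.cos ((k:ℝ)*θ))| := by
    refine (abs_sub _ _).trans ?_
    rw [abs_neg, abs_mul, abs_two]
  refine habs.trans ?_
  have hcast : ((p/2 : ℕ) : ℝ) * 2 ≤ (p:ℝ) := by
    have := Nat.div_mul_le_self p 2
    exact_mod_cast this
  nlinarith [h0, hsum, mul_pos hK2 (pow_pos hμ0 2), Nat.cast_nonneg (α := ℝ) (p/2)]

end Key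

theorem fSym_hyp_L1_convergence (α : ℝ) (hα : 0 < α) (p : ℕ) (hp : 2 ≤ p)
    (Φ : ℝ → ℕ → ℝ → ℝ)
    (hΦ1 : ∀ μ : ℝ, 0 < μ → ∀ t : ℝ, Φ μ 1 t =
      if 0 ≤ t ∧ t < 1 then μ / (2 * (Real.cosh μ - 1)) * Real.sinh (μ * t)
      else if 1 ≤ t ∧ t < 2 then μ / (2 * (Real.cosh μ - 1)) * Real.sinh (μ * (2 - t))
      else 0)
    (hΦrec : ∀ μ : ℝ, 0 < μ → ∀ q : ℕ, 2 ≤ q → ∀ t : ℝ,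
      Φ μ q t = ∫ s in (0:ℝ)..t, (Φ μ (q - 1) s - Φ μ (q - 1) (s - 1)))
    (ψ : ℕ → ℝ → ℝ)
    (hψ1 : ∀ t : ℝ, ψ 1 t =
      if 0 ≤ t ∧ t < 1 then t
      else if 1 ≤ t ∧ t < 2 then 2 - t
      else 0)
    (hψrec : ∀ q : ℕ, 2 ≤ q → ∀ t : ℝ,
      ψ q t = ∫ s in (0:ℝ)..t, (ψ (q - 1) s - ψ (q - 1) (s - 1))) :
    ∃ C : ℝ, 0 < C ∧ ∃ N : ℕ, 1 ≤ N ∧ ∀ n : ℕ, N ≤ n →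
      (∫ θ in (-Real.pi)..Real.pi, |fSym (Φ (α / n)) p θ - fSym ψ p θ|) ≤ C / (n : ℝ) ^ 2 := by
  obtain ⟨M, hM, hMb⟩ := propA Φ ψ hΦ1 hΦrec hψ1 hψrec p hp
  refine ⟨2*Real.pi*M*α^2, by positivity, max 1 ⌈α⌉₊, le_max_left _ _, ?_⟩
  intro n hn
  have hn1 : 1 ≤ n := le_trans (le_max_left _ _) hn
  have hnR : (0:ℝ) < n := by exact_mod_cast hn1
  have hα_le : α ≤ (n:ℝ) := by
    have h1 : ((⌈α⌉₊ : ℕ) : ℝ) ≤ (n:ℝ) := by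
      exact_mod_cast le_trans (le_max_right _ _) hn
    exact (Nat.le_ceil α).trans h1
  have hμ0 : 0 < α / n := div_pos hα hnR
  have hμ1 : α / n ≤ 1 := by rw [div_le_one hnR]; exact hα_le
  have hb := hMb (α/n) hμ0 hμ1
  have hI := intervalIntegral.norm_integral_le_of_norm_le_const
    (f := fun θ => |fSym (Φ (α/n)) p θ - fSym ψ p θ|) (C := M * (α/n)^2)
    (a := -Real.pi) (b := Real.pi)
    (fun θ _ => by rw [Real.norm_eq_abs, abs_abs]; exact hb θ)
  rw [Real.norm_eq_abs] at hI
  have h2 : |Real.pi - -Real.pi| = 2*Real.pi := by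
    rw [abs_of_nonneg (by linarith [Real.pi_pos])]
    ring
  set I := ∫ θ in (-Real.pi)..Real.pi, |fSym (Φ (α/n)) p θ - fSym ψ p θ| with hIdef
  calc I ≤ |I| := le_abs_self _
    _ ≤ M * (α/n)^2 * |Real.pi - -Real.pi| := hI
    _ = 2*Real.pi*M*α^2 / (n:ℝ)^2 := by
        rw [h2]
        field_simp
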